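/- arXiv:2508.00597 — 5 statements merged into one kernel-verified Lean document; each statement's English description precedes it below -/
import Mathlib

section
/- Let $G$ be a group, $k$ a field, $\omega: G^3 \to k^*$ a normalized 3-cocycle (i.e. $\omega(x,y,z)=1$ whenever one of $x,y,z$ is the identity, and $\omega(y,z,t)\omega(x,yz,t)\omega(x,y,z)=\omega(x,y,zt)\omega(xy,z,t)$ for all $x,y,z,t$), and $\mathfrak{g}\in G$. Define $\flat_{\mathfrak{g}}\omega(x,y) = \omega(\mathfrak{g},x,y)\omega(x,y,\mathfrak{g})/\omega(x,\mathfrak{g},y)$. Then $\flat_{\mathfrak{g}}\omega$ is a normalized 2-cocycle on $G$ if and only if $\omega(\mathfrak{g}x,y,z)\omega(x,\mathfrak{g}y,z)\omega(x,y,\mathfrak{g}z) = \omega(x\mathfrak{g},y,z)\omega(x,y\mathfrak{g},z)\omega(x,y,z\mathfrak{g})$ for all $x,y,z\in G$. -/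
/-- The 2-cochain `♭_g ω (x,y) = ω(g,x,y) ω(x,y,g) / ω(x,g,y)`. -/
def flatCocycle {G : Type*} [Group G] {k : Type*} [Field k]
    (ω : G → G → G → kˣ) (g : G) : G → G → kˣ :=
  fun x y => ω g x y * ω x y g / ω x g y

lemma flat_key {G : Type*} [Group G] {k : Type*} [Field k]
    (ω : G → G → G → kˣ)
    (hcoc : ∀ x y z t : G,
      ω y z t * ω x (y * z) t * ω x y z = ω x y (z * t) * ω (x * y) z t)
    (g x y z : G) :
    (ω g x y * ω x y g) * (ω g (x*y) z * ω (x*y) z g) * (ω x g (y*z) * ω y g z) *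
      (ω (x*g) y z * ω x (y*g) z * ω x y (z*g)) =
    (ω g x (y*z) * ω x (y*z) g) * (ω g y z * ω y z g) * (ω x g y * ω (x*y) g z) *
      (ω (g*x) y z * ω x (g*y) z * ω x y (g*z)) := by
  have key : ((ω g x y * ω x y g) * (ω g (x*y) z * ω (x*y) z g) * (ω x g (y*z) * ω y g z) *
      (ω (x*g) y z * ω x (y*g) z * ω x y (z*g))) * ω x y z =
    ((ω g x (y*z) * ω x (y*z) g) * (ω g y z * ω y z g) * (ω x g y * ω (x*y) g z) *
      (ω (g*x) y z * ω x (g*y) z * ω x y (g*z))) * ω x y z := by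
    have h1 := congrArg (Units.val) (hcoc g x y z)
    have h2 := congrArg (Units.val) (hcoc x g y z)
    have h3 := congrArg (Units.val) (hcoc x y g z)
    have h4 := congrArg (Units.val) (hcoc x y z g)
    push_cast at h1 h2 h3 h4
    rw [Units.ext_iff]
    push_cast
    linear_combination
      ((ω x g (y*z) : k) * (ω (x*g) y z : k) * ((ω y g z : k) * (ω x (y*g) z : k) * (ω x y g : k))
        * ((ω x y (z*g) : k) * (ω (x*y) z g : k))) * h1
      - (((ω g x (y*z) : k) * (ω (g*x) y z : k)) * ((ω y g z : k) * (ω x (y*g) z : k) * (ω x y g : k))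
        * ((ω x y (z*g) : k) * (ω (x*y) z g : k))) * h2
      + (((ω g x (y*z) : k) * (ω (g*x) y z : k)) * ((ω g y z : k) * (ω x (g*y) z : k) * (ω x g y : k))
        * ((ω x y (z*g) : k) * (ω (x*y) z g : k))) * h3
      - (((ω g x (y*z) : k) * (ω (g*x) y z : k)) * ((ω g y z : k) * (ω x (g*y) z : k) * (ω x g y : k))
        * ((ω x y (g*z) : k) * (ω (x*y) g z : k))) * h4
  exact mul_right_cancel key

lemma flat_pt {G : Type*} [Group G] {k : Type*} [Field k]
    (ω : G → G → G → kˣ)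
    (hcoc : ∀ x y z t : G,
      ω y z t * ω x (y * z) t * ω x y z = ω x y (z * t) * ω (x * y) z t)
    (g x y z : G) :
    (flatCocycle ω g x y * flatCocycle ω g (x * y) z =
        flatCocycle ω g x (y * z) * flatCocycle ω g y z) ↔
    (ω (g * x) y z * ω x (g * y) z * ω x y (g * z) =
        ω (x * g) y z * ω x (y * g) z * ω x y (z * g)) := by
  have key := flat_key ω hcoc g x y z
  simp only [flatCocycle]
  rw [div_mul_div_comm, div_mul_div_comm, div_eq_div_iff_mul_eq_mul]
  constructor
  · intro h
    rw [h] at key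
    exact (mul_left_cancel key).symm
  · intro h
    rw [h] at key
    exact mul_right_cancel key

/-- for a normalized 3-cocycle `ω` and `g ∈ G`, `♭_g ω` is a
normalized 2-cocycle iff the displayed identity holds. -/
theorem flatCocycle_isTwoCocycle_iff {G : Type*} [Group G] {k : Type*} [Field k]
    (ω : G → G → G → kˣ)
    (hnorm : ∀ x y z : G, x = 1 ∨ y = 1 ∨ z = 1 → ω x y z = 1)
    (hcoc : ∀ x y z t : G,
      ω y z t * ω x (y * z) t * ω x y z = ω x y (z * t) * ω (x * y) z t)
    (g : G) :
    ((∀ x : G, flatCocycle ω g 1 x = 1 ∧ flatCocycle ω g x 1 = 1) ∧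
      (∀ x y z : G, flatCocycle ω g x y * flatCocycle ω g (x * y) z =
        flatCocycle ω g x (y * z) * flatCocycle ω g y z)) ↔
    (∀ x y z : G,
      ω (g * x) y z * ω x (g * y) z * ω x y (g * z) =
        ω (x * g) y z * ω x (y * g) z * ω x y (z * g)) := by
  constructor
  · rintro ⟨-, hc⟩ x y z
    exact (flat_pt ω hcoc g x y z).mp (hc x y z)
  · intro h
    refine ⟨fun x => ⟨?_, ?_⟩, fun x y z => (flat_pt ω hcoc g x y z).mpr (h x y z)⟩
    · simp [flatCocycle, hnorm g 1 x (Or.inr (Or.inl rfl)),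
        hnorm 1 x g (Or.inl rfl), hnorm 1 g x (Or.inl rfl)]
    · simp [flatCocycle, hnorm g x 1 (Or.inr (Or.inr rfl)),
        hnorm x 1 g (Or.inr (Or.inl rfl)), hnorm x g 1 (Or.inr (Or.inr rfl))]
end

section
/- Let $m\geq 2$ and $0\leq c\leq m-1$ be integers. If there exist integers $f,\lambda$ with $0\leq f,\lambda\leq m-1$ and an integer $k$ such that $2cf^2 + 2m\lambda f - (2k+1)m^2 = 0$, then $\gcd(c, m)$ is even. -/
private lemma no_sol_odd_c (c : ℤ) (hc : ¬ 2 ∣ c) :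
    ∀ N : ℕ, ∀ m : ℤ, m.toNat ≤ N → 1 ≤ m →
      ∀ f lam k : ℤ, 2 * c * f ^ 2 + 2 * m * lam * f ≠ (2 * k + 1) * m ^ 2 := by
  intro N
  induction N with
  | zero => intro m hle hm; omega
  | succ N ih =>
    intro m hle hm f lam k heq
    rcases Int.even_or_odd m with ⟨n, hn⟩ | hodd
    · -- m = 2n, descend
      have hn1 : 1 ≤ n := by omega
      subst hn
      have h2 : c * f ^ 2 + 2 * n * lam * f = 2 * (2 * k + 1) * n ^ 2 := by ring_nf; ring_nf at heq; linarith
      have hf2 : 2 ∣ c * f ^ 2 := ⟨(2 * k + 1) * n ^ 2 - n * lam * f, by linarith⟩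
      have hf : 2 ∣ f := by
        rcases (Int.prime_two.dvd_mul.mp hf2) with h | h
        · exact absurd h hc
        · exact Int.prime_two.dvd_of_dvd_pow h
      obtain ⟨g, hg⟩ := hf
      subst hg
      have h3 : 2 * c * g ^ 2 + 2 * n * lam * g = (2 * k + 1) * n ^ 2 := by nlinarith [h2]
      exact ih n (by omega) hn1 g lam k h3
    · -- m odd: parity contradiction
      have hE : Even (2 * c * f ^ 2 + 2 * m * lam * f) := ⟨c * f ^ 2 + m * lam * f, by ring⟩
      have hO : Odd ((2 * k + 1) * m ^ 2) := (odd_two_mul_add_one k).mul (hodd.pow)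
      rw [heq] at hE
      exact (Int.not_odd_iff_even.mpr hE) hO

/-- let `m ≥ 2` and `0 ≤ c ≤ m-1`.  If there are integers
`f, λ ∈ {0, …, m-1}` and `k` with `2cf² + 2mλf - (2k+1)m² = 0`, then
`gcd(c, m)` is even. -/
theorem gcd_even_of_solution (m c : ℤ) (hm : 2 ≤ m) (hc0 : 0 ≤ c) (hc1 : c ≤ m - 1)
    (h : ∃ f lam k : ℤ, 0 ≤ f ∧ f ≤ m - 1 ∧ 0 ≤ lam ∧ lam ≤ m - 1 ∧
      2 * c * f ^ 2 + 2 * m * lam * f - (2 * k + 1) * m ^ 2 = 0) :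
    2 ∣ Int.gcd c m := by
  obtain ⟨f, lam, k, hf0, hf1, hl0, hl1, heq⟩ := h
  have heq' : 2 * c * f ^ 2 + 2 * m * lam * f = (2 * k + 1) * m ^ 2 := by linarith
  -- m must be even
  have hmE : 2 ∣ m := by
    by_contra hmO
    have hodd : Odd m := Int.not_even_iff_odd.mp (fun he => hmO he.two_dvd)
    have hE : Even (2 * c * f ^ 2 + 2 * m * lam * f) := ⟨c * f ^ 2 + m * lam * f, by ring⟩
    have hO : Odd ((2 * k + 1) * m ^ 2) := (odd_two_mul_add_one k).mul (hodd.pow)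
    rw [heq'] at hE
    exact (Int.not_odd_iff_even.mpr hE) hO
  -- c must be even
  have hcE : 2 ∣ c := by
    by_contra hcO
    exact no_sol_odd_c c hcO m.toNat m le_rfl (by omega) f lam k heq'
  -- conclude
  have h1 : 2 ∣ c.natAbs := by omega
  have h2 : 2 ∣ m.natAbs := by omega
  exact Nat.dvd_gcd h1 h2
end

section
/- Let $m\geq 2$ and $0\leq c\leq m-1$ be integers such that $d := \gcd(c,m)$ is even (in particular $d \neq 0$, so $m$ is even). Then there exist integers $f, \lambda, k$ with $0\leq f \leq m-1$, $0 \leq \lambda \leq m-1$, such that $2cf^2 + 2m\lambda f = (2k+1)m^2$. -/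
/-- let `m ≥ 2` and `0 ≤ c ≤ m-1` with `gcd(c, m)` even.  Then there
exist integers `f, λ ∈ {0, …, m-1}` and `k` with `2cf² + 2mλf = (2k+1)m²`. -/
theorem solution_of_gcd_even (m c : ℤ) (hm : 2 ≤ m) (hc0 : 0 ≤ c) (hc1 : c ≤ m - 1)
    (hd : 2 ∣ Int.gcd c m) :
    ∃ f lam k : ℤ, 0 ≤ f ∧ f ≤ m - 1 ∧ 0 ≤ lam ∧ lam ≤ m - 1 ∧
      2 * c * f ^ 2 + 2 * m * lam * f = (2 * k + 1) * m ^ 2 := by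
  have hm2 : (2 : ℤ) ∣ m := by
    have h1 : ((Int.gcd c m : ℤ)) ∣ m := Int.gcd_dvd_right c m
    have h2 : (2 : ℤ) ∣ (Int.gcd c m : ℤ) := by exact_mod_cast hd
    exact h2.trans h1
  have hc2 : (2 : ℤ) ∣ c := by
    have h1 : ((Int.gcd c m : ℤ)) ∣ c := Int.gcd_dvd_left c m
    have h2 : (2 : ℤ) ∣ (Int.gcd c m : ℤ) := by exact_mod_cast hd
    exact h2.trans h1
  obtain ⟨n, rfl⟩ := hm2
  obtain ⟨c', rfl⟩ := hc2
  have hn : 1 ≤ n := by linarith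
  rcases Int.even_or_odd c' with ⟨t, ht⟩ | ⟨t, ht⟩
  · refine ⟨n, 1, t, by linarith, by linarith, by norm_num, by linarith, by subst ht; ring⟩
  · refine ⟨n, 0, t, by linarith, by linarith, by norm_num, by linarith, by subst ht; ring⟩
end

section
/- Every Hopf algebra automorphism $\varphi$ of the Sweedler 4-dimensional Hopf algebra $H_4$ over a field $k$ of characteristic $\neq 2$ satisfies $\varphi(g) = g$ and $\varphi(x) = \omega x$ for some nonzero scalar $\omega \in k$. -/
open scoped TensorProduct

/-- every Hopf algebra automorphism `φ` of the Sweedler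
4-dimensional Hopf algebra `H₄` (presented here as a 4-dimensional `k`-algebra
with basis `1, g, x, gx`, relations `g² = 1`, `x² = 0`, `xg = -gx`, and
comultiplication `Δ(g) = g ⊗ g`, `Δ(x) = g ⊗ x + x ⊗ 1`) over a field of
characteristic `≠ 2` satisfies `φ(g) = g` and `φ(x) = ω • x` for some `ω ≠ 0`. -/
theorem sweedler_hopf_automorphism {k : Type*} [Field k] (hchar : (2 : k) ≠ 0)
    {A : Type*} [Ring A] [Algebra k A]
    (g x : A) (hg : g ^ 2 = 1) (hx : x ^ 2 = 0) (hxg : x * g = -(g * x))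
    (b : Module.Basis (Fin 4) k A)
    (hb0 : b 0 = 1) (hb1 : b 1 = g) (hb2 : b 2 = x) (hb3 : b 3 = g * x)
    (Δ : A →ₐ[k] A ⊗[k] A)
    (hΔg : Δ g = g ⊗ₜ[k] g) (hΔx : Δ x = g ⊗ₜ[k] x + x ⊗ₜ[k] 1)
    (φ : A ≃ₐ[k] A)
    (hφΔ : ∀ y : A, Δ (φ y) = (Algebra.TensorProduct.map φ.toAlgHom φ.toAlgHom) (Δ y)) :
    φ g = g ∧ ∃ ω : k, ω ≠ 0 ∧ φ x = ω • x := by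
  have hgg : g * g = 1 := by rw [← sq, hg]
  have hxx : x * x = 0 := by rw [← sq, hx]
  have r1 : b.repr (1 : A) = Finsupp.single 0 1 := by rw [← hb0, b.repr_self]
  have rg : b.repr g = Finsupp.single 1 1 := by rw [← hb1, b.repr_self]
  have rx : b.repr x = Finsupp.single 2 1 := by rw [← hb2, b.repr_self]
  have rgx : b.repr (g * x) = Finsupp.single 3 1 := by rw [← hb3, b.repr_self]
  have hrepr : ∀ y : A,
      y = b.repr y 0 • (1 : A) + b.repr y 1 • g + b.repr y 2 • x + b.repr y 3 • (g * x) := by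
    intro y
    have h := b.sum_repr y
    rw [Fin.sum_univ_four, hb0, hb1, hb2, hb3] at h
    exact h.symm
  have hΔ1 : Δ (1 : A) = (1 : A) ⊗ₜ[k] 1 := by
    rw [map_one, Algebra.TensorProduct.one_def]
  have hΔgx : Δ (g * x) = (1 : A) ⊗ₜ[k] (g * x) + (g * x) ⊗ₜ[k] g := by
    rw [map_mul, hΔg, hΔx, mul_add, Algebra.TensorProduct.tmul_mul_tmul,
      Algebra.TensorProduct.tmul_mul_tmul, hgg, mul_one]
  have hΔexp : ∀ y : A, Δ y =
      b.repr y 0 • ((1 : A) ⊗ₜ[k] 1) + b.repr y 1 • (g ⊗ₜ[k] g)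
        + b.repr y 2 • (g ⊗ₜ[k] x + x ⊗ₜ[k] 1)
        + b.repr y 3 • ((1 : A) ⊗ₜ[k] (g * x) + (g * x) ⊗ₜ[k] g) := by
    intro y
    conv_lhs => rw [hrepr y]
    rw [map_add, map_add, map_add, map_smul, map_smul, map_smul, map_smul,
      hΔ1, hΔg, hΔx, hΔgx]
  set B := b.tensorProduct b with hB
  set p := b.repr (φ g) with hp
  -- equation for φ g
  have E1 : (φ g) ⊗ₜ[k] (φ g) = Δ (φ g) := by
    rw [hφΔ, hΔg]; simp [Algebra.TensorProduct.map_tmul]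
  rw [hΔexp (φ g)] at E1
  have coef : ∀ i j : Fin 4, p i * p j =
      p 0 * ((Finsupp.single (0:Fin 4) (1:k)) i * (Finsupp.single (0:Fin 4) (1:k)) j)
      + p 1 * ((Finsupp.single (1:Fin 4) (1:k)) i * (Finsupp.single (1:Fin 4) (1:k)) j)
      + p 2 * ((Finsupp.single (1:Fin 4) (1:k)) i * (Finsupp.single (2:Fin 4) (1:k)) j
              + (Finsupp.single (2:Fin 4) (1:k)) i * (Finsupp.single (0:Fin 4) (1:k)) j)
      + p 3 * ((Finsupp.single (0:Fin 4) (1:k)) i * (Finsupp.single (3:Fin 4) (1:k)) j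
              + (Finsupp.single (3:Fin 4) (1:k)) i * (Finsupp.single (1:Fin 4) (1:k)) j) := by
    intro i j
    have h := DFunLike.congr_fun (congrArg B.repr E1) (i, j)
    simp [hB, Module.Basis.tensorProduct_repr_tmul_apply, r1, rg, rx, rgx, ← hp] at h
    linear_combination h
  have h00 := coef 0 0
  have h11 := coef 1 1
  have h01 := coef 0 1
  have h02 := coef 0 2
  have h20 := coef 2 0
  have h03 := coef 0 3
  have h30 := coef 3 0
  simp [Finsupp.single_apply] at h00 h11 h01 h02 h20 h03 h30
  -- step 1 : φ g = g
  have hφg : φ g = g := by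
    rcases eq_or_ne (p 0) 0 with h0 | h0
    · have h2 : p 2 = 0 := by rw [← h20, h0, mul_zero]
      have h3 : p 3 = 0 := by rw [← h03, h0, zero_mul]
      have h1 : p 1 = 1 := by
        rcases mul_eq_zero.mp (show p 1 * (p 1 - 1) = 0 by linear_combination h11) with h | h
        · exfalso
          have hz : φ g = 0 := by
            rw [hrepr (φ g), ← hp, h0, h, h2, h3]; simp
          have : g = (0 : A) := φ.injective (by rw [hz, map_zero])
          exact b.ne_zero 1 (hb1.trans this)
        · linear_combination h
      rw [hrepr (φ g), ← hp, h0, h1, h2, h3]; simp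
    · exfalso
      have h0' : p 0 = 1 := mul_left_cancel₀ h0 (by rw [h00, mul_one])
      have h1 : p 1 = 0 := h01.resolve_left h0
      have h2 : p 2 = 0 := h02.resolve_left h0
      have h3 : p 3 = 0 := h30.resolve_right h0
      have hone : φ g = 1 := by rw [hrepr (φ g), ← hp, h0', h1, h2, h3]; simp
      have hg1 : g = (1 : A) := φ.injective (by rw [hone, map_one])
      have : b 1 = b 0 := by rw [hb1, hb0, hg1]
      exact (by decide : (1 : Fin 4) ≠ 0) (b.injective this)
  refine ⟨hφg, ?_⟩
  -- step 2 : φ x = ω • x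
  set q := b.repr (φ x) with hq
  have E2 : g ⊗ₜ[k] (φ x) + (φ x) ⊗ₜ[k] (1 : A) = Δ (φ x) := by
    rw [hφΔ, hΔx, map_add, Algebra.TensorProduct.map_tmul, Algebra.TensorProduct.map_tmul]
    simp only [AlgEquiv.toAlgHom_eq_coe, AlgHom.coe_coe, AlgEquiv.coe_toAlgHom, AlgEquiv.toAlgHom_apply, map_one, hφg]
  rw [hΔexp (φ x)] at E2
  have coef2 : ∀ i j : Fin 4,
      (Finsupp.single (1:Fin 4) (1:k)) i * q j + q i * (Finsupp.single (0:Fin 4) (1:k)) j =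
      q 0 * ((Finsupp.single (0:Fin 4) (1:k)) i * (Finsupp.single (0:Fin 4) (1:k)) j)
      + q 1 * ((Finsupp.single (1:Fin 4) (1:k)) i * (Finsupp.single (1:Fin 4) (1:k)) j)
      + q 2 * ((Finsupp.single (1:Fin 4) (1:k)) i * (Finsupp.single (2:Fin 4) (1:k)) j
              + (Finsupp.single (2:Fin 4) (1:k)) i * (Finsupp.single (0:Fin 4) (1:k)) j)
      + q 3 * ((Finsupp.single (0:Fin 4) (1:k)) i * (Finsupp.single (3:Fin 4) (1:k)) j
              + (Finsupp.single (3:Fin 4) (1:k)) i * (Finsupp.single (1:Fin 4) (1:k)) j) := by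
    intro i j
    have h := DFunLike.congr_fun (congrArg B.repr E2) (i, j)
    simp [hB, Module.Basis.tensorProduct_repr_tmul_apply, r1, rg, rx, rgx, ← hq] at h
    linear_combination h
  have e10 := coef2 1 0
  have e03 := coef2 0 3
  simp [Finsupp.single_apply] at e10 e03
  have hq1 : q 1 = -(q 0) := by linear_combination e10
  have hq3 : q 3 = 0 := e03.symm
  have hsq0 : φ x * φ x = 0 := by rw [← map_mul, hxx, map_zero]
  have hyexp : φ x = q 0 • (1 : A) + (-(q 0)) • g + q 2 • x := by
    conv_lhs => rw [hrepr (φ x)]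
    rw [← hq, hq1, hq3]; simp
  have hexp2 : φ x * φ x =
      (2 * (q 0 * q 0)) • (1 : A) + (-(2 * (q 0 * q 0))) • g + (2 * (q 0 * q 2)) • x := by
    rw [hyexp]
    simp only [add_mul, mul_add, smul_mul_assoc, mul_smul_comm, smul_smul, hgg, hxx, hxg,
      mul_one, one_mul, smul_neg, neg_smul, neg_neg, mul_neg, neg_mul, smul_zero]
    module
  have hz : (2 * (q 0 * q 0)) • (1 : A) + (-(2 * (q 0 * q 0))) • g + (2 * (q 0 * q 2)) • x
      = 0 := by rw [← hexp2, hsq0]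
  have hc := congrArg (fun z => b.repr z 0) hz
  simp only [map_add, map_smul, map_zero, r1, rg, rx, Finsupp.coe_add, Finsupp.coe_smul,
    Pi.add_apply, Pi.smul_apply, Finsupp.single_apply, Finsupp.coe_zero] at hc
  simp [Finsupp.single_apply] at hc
  have h0 : q 0 = 0 := by
    rcases hc with h | h
    · exact absurd h hchar
    · exact h
  refine ⟨q 2, ?_, ?_⟩
  · intro h2
    have hz2 : φ x = 0 := by rw [hyexp, h0, h2]; simp
    have : x = (0 : A) := φ.injective (by rw [hz2, map_zero])
    exact b.ne_zero 2 (hb2.trans this)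
  · rw [hyexp, h0]; simp
end

section
/- Let $G = C_{m_1}\times\cdots\times C_{m_n}$ be a finite abelian group with $n\geq 3$, and let $M^c_{rst}$ ($1\leq r<s<t\leq n$) be given integers, $M$ a positive integer. Then the following are equivalent for integers $f_1,\ldots,f_n$: (a) for all choices of integers $k_1,\ldots,k_n, j_1,\ldots,j_n$, $M$ divides $\sum_{1\leq r<s<t\leq n} M^c_{rst}(k_r j_s f_t + f_r k_s j_t - k_r f_s j_t)$; (b) for every pair $1\leq r<s\leq n$, $M$ divides $\sum_{u=1}^{r-1} M^c_{urs} f_u - \sum_{v=r+1}^{s-1} M^c_{rvs} f_v + \sum_{w=s+1}^{n} M^c_{rsw} f_w$. -/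
open Finset

private lemma Icc_succ_filter' (a s n : ℕ) (hs : a ≤ s) :
    Icc (s+1) n = (Icc a n).filter (fun t => s < t) := by
  ext t; simp only [mem_Icc, mem_filter]; omega

private lemma Icc_pred_filter' (a t n : ℕ) (ha : 1 ≤ a) (ht : t ≤ n) :
    Icc a (t-1) = (Icc a n).filter (fun s => s < t) := by
  ext s; simp only [mem_Icc, mem_filter]; omega

private lemma triangle_swap (a n : ℕ) (ha : 1 ≤ a) (g : ℕ → ℕ → ℤ) :
    ∑ s ∈ Icc a n, ∑ t ∈ Icc (s+1) n, g s t
      = ∑ t ∈ Icc a n, ∑ s ∈ Icc a (t-1), g s t := by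
  calc ∑ s ∈ Icc a n, ∑ t ∈ Icc (s+1) n, g s t
      = ∑ s ∈ Icc a n, ∑ t ∈ Icc a n, if s < t then g s t else 0 := by
        refine Finset.sum_congr rfl fun s hs => ?_
        rw [Icc_succ_filter' a s n (mem_Icc.mp hs).1, Finset.sum_filter]
    _ = ∑ t ∈ Icc a n, ∑ s ∈ Icc a n, if s < t then g s t else 0 := Finset.sum_comm
    _ = ∑ t ∈ Icc a n, ∑ s ∈ Icc a (t-1), g s t := by
        refine Finset.sum_congr rfl fun t ht => ?_
        rw [Icc_pred_filter' a t n ha (mem_Icc.mp ht).2, Finset.sum_filter]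

private lemma key_identity (n : ℕ) (Mc : ℕ → ℕ → ℕ → ℤ) (f kk jj : ℕ → ℤ) :
    ∑ r ∈ Icc 1 n, ∑ s ∈ Icc (r + 1) n, ∑ t ∈ Icc (s + 1) n,
        Mc r s t * (kk r * jj s * f t + f r * kk s * jj t - kk r * f s * jj t)
      = ∑ r ∈ Icc 1 n, ∑ s ∈ Icc (r + 1) n, kk r * jj s *
          ((∑ u ∈ Icc 1 (r - 1), Mc u r s * f u) -
           (∑ v ∈ Icc (r + 1) (s - 1), Mc r v s * f v) +
           (∑ w ∈ Icc (s + 1) n, Mc r s w * f w)) := by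
  have hS1 : (∑ r ∈ Icc 1 n, ∑ s ∈ Icc (r+1) n, ∑ t ∈ Icc (s+1) n,
      Mc r s t * (kk r * jj s * f t))
      = ∑ r ∈ Icc 1 n, ∑ s ∈ Icc (r+1) n, kk r * jj s * ∑ w ∈ Icc (s+1) n, Mc r s w * f w := by
    refine Finset.sum_congr rfl fun r _ => Finset.sum_congr rfl fun s _ => ?_
    rw [Finset.mul_sum]
    exact Finset.sum_congr rfl fun t _ => by ring
  have hS2 : (∑ r ∈ Icc 1 n, ∑ s ∈ Icc (r+1) n, ∑ t ∈ Icc (s+1) n,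
      Mc r s t * (f r * kk s * jj t))
      = ∑ r ∈ Icc 1 n, ∑ s ∈ Icc (r+1) n, kk r * jj s * ∑ u ∈ Icc 1 (r-1), Mc u r s * f u := by
    calc ∑ r ∈ Icc 1 n, ∑ s ∈ Icc (r+1) n, ∑ t ∈ Icc (s+1) n,
          Mc r s t * (f r * kk s * jj t)
        = ∑ s ∈ Icc 1 n, ∑ r ∈ Icc 1 (s-1), ∑ t ∈ Icc (s+1) n,
          Mc r s t * (f r * kk s * jj t) :=
          triangle_swap 1 n le_rfl (fun r s => ∑ t ∈ Icc (s+1) n, Mc r s t * (f r * kk s * jj t))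
      _ = ∑ s ∈ Icc 1 n, ∑ t ∈ Icc (s+1) n, ∑ r ∈ Icc 1 (s-1),
          Mc r s t * (f r * kk s * jj t) := by
          exact Finset.sum_congr rfl fun s _ => Finset.sum_comm
      _ = ∑ r ∈ Icc 1 n, ∑ s ∈ Icc (r+1) n, kk r * jj s * ∑ u ∈ Icc 1 (r-1), Mc u r s * f u := by
          refine Finset.sum_congr rfl fun s _ => Finset.sum_congr rfl fun t _ => ?_
          rw [Finset.mul_sum]
          exact Finset.sum_congr rfl fun u _ => by ring
  have hS3 : (∑ r ∈ Icc 1 n, ∑ s ∈ Icc (r+1) n, ∑ t ∈ Icc (s+1) n,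
      Mc r s t * (kk r * f s * jj t))
      = ∑ r ∈ Icc 1 n, ∑ s ∈ Icc (r+1) n, kk r * jj s * ∑ v ∈ Icc (r+1) (s-1), Mc r v s * f v := by
    refine Finset.sum_congr rfl fun r _ => ?_
    calc ∑ s ∈ Icc (r+1) n, ∑ t ∈ Icc (s+1) n, Mc r s t * (kk r * f s * jj t)
        = ∑ t ∈ Icc (r+1) n, ∑ s ∈ Icc (r+1) (t-1), Mc r s t * (kk r * f s * jj t) :=
          triangle_swap (r+1) n (by omega) _
      _ = ∑ s ∈ Icc (r+1) n, kk r * jj s * ∑ v ∈ Icc (r+1) (s-1), Mc r v s * f v := by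
          refine Finset.sum_congr rfl fun t _ => ?_
          rw [Finset.mul_sum]
          exact Finset.sum_congr rfl fun v _ => by ring
  simp only [mul_sub, mul_add, Finset.sum_add_distrib, Finset.sum_sub_distrib] at hS1 hS2 hS3 ⊢
  rw [hS1, hS2, hS3]
  ring

/-- for `n ≥ 3`, integers `M > 0`, coefficients `Mc r s t`
(for `1 ≤ r < s < t ≤ n`) and integers `f 1, …, f n`, the following are
equivalent: (a) for all integer families `kk, jj`, `M` divides
`∑_{r<s<t} Mc r s t (kk r · jj s · f t + f r · kk s · jj t - kk r · f s · jj t)`;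
(b) for every `1 ≤ r < s ≤ n`, `M` divides
`∑_{u<r} Mc u r s · f u - ∑_{r<v<s} Mc r v s · f v + ∑_{s<w≤n} Mc r s w · f w`. -/
theorem divisibility_equivalence (n : ℕ) (hn : 3 ≤ n) (M : ℤ) (hM : 0 < M)
    (Mc : ℕ → ℕ → ℕ → ℤ) (f : ℕ → ℤ) :
    (∀ kk jj : ℕ → ℤ,
      M ∣ ∑ r ∈ Icc 1 n, ∑ s ∈ Icc (r + 1) n, ∑ t ∈ Icc (s + 1) n,
        Mc r s t * (kk r * jj s * f t + f r * kk s * jj t - kk r * f s * jj t)) ↔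
    (∀ r s : ℕ, 1 ≤ r → r < s → s ≤ n →
      M ∣ ((∑ u ∈ Icc 1 (r - 1), Mc u r s * f u) -
            (∑ v ∈ Icc (r + 1) (s - 1), Mc r v s * f v) +
            (∑ w ∈ Icc (s + 1) n, Mc r s w * f w))) := by
  set E : ℕ → ℕ → ℤ := fun r s =>
    (∑ u ∈ Icc 1 (r - 1), Mc u r s * f u) -
      (∑ v ∈ Icc (r + 1) (s - 1), Mc r v s * f v) +
      (∑ w ∈ Icc (s + 1) n, Mc r s w * f w) with hE
  constructor
  · intro h r s hr hrs hsn
    have hdvd := h (fun i => if i = r then 1 else 0) (fun i => if i = s then 1 else 0)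
    rw [key_identity] at hdvd
    have heq : (∑ a ∈ Icc 1 n, ∑ b ∈ Icc (a + 1) n,
        (if a = r then (1:ℤ) else 0) * (if b = s then (1:ℤ) else 0) * E a b) = E r s := by
      rw [Finset.sum_eq_single_of_mem r (mem_Icc.mpr ⟨hr, by omega⟩)
        (fun a _ har => Finset.sum_eq_zero fun b _ => by simp [har])]
      rw [Finset.sum_eq_single_of_mem s (mem_Icc.mpr ⟨by omega, hsn⟩)
        (fun b _ hbs => by simp [hbs])]
      simp
    rw [heq] at hdvd
    exact hdvd
  · intro h kk jj
    rw [key_identity]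
    refine Finset.dvd_sum fun r hr => Finset.dvd_sum fun s hs => ?_
    have hr' := mem_Icc.mp hr
    have hs' := mem_Icc.mp hs
    exact Dvd.dvd.mul_left (h r s hr'.1 (by omega) hs'.2) _
end
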